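/- Let f: [0,∞) → [0,∞] be upper semi-continuous, increasing, f(0) = 0, with ∫₀⁺ dy/f(y) < ∞. Define s(y) = ∫₀^y dt/f(t). Then there exist y₀ > 0 and s₀ = s(y₀) < ∞ such that s restricts to a strictly increasing homeomorphism from [0, y₀] onto [0, s₀], and its inverse y(s) is Lipschitz on [0, s₀] with Lipschitz constant f(y₀), satisfies y(0) = 0, y is differentiable from the right at 0 with derivative 0, and y'(s) = f(y(s)) almost everywhere. -/

import Mathlib

open MeasureTheory
open scoped ENNReal

/-- The "arc length" function `s(y) = ∫₀ʸ dt/f(t)` (realified). -/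
noncomputable def Sfun (f : ℝ → ℝ≥0∞) (y : ℝ) : ℝ :=
  (∫⁻ t in Set.Ioo 0 y, (f t)⁻¹).toReal

/-- If `f : [0,∞) → [0,∞]` is upper semi-continuous, increasing, `f(0) = 0`, and
`∫₀⁺ dy/f(y) < ∞`, then `s(y) = ∫₀ʸ dt/f(t)` restricts, for some `y₀ > 0` and
`s₀ = s(y₀)`, to a strictly increasing homeomorphism of `[0, y₀]` onto `[0, s₀]` whose
inverse `Y` is Lipschitz with constant `f(y₀)`, satisfies `Y(0) = 0`, has right derivative `0`
at `0`, and satisfies `Y'(s) = f(Y(s))` almost everywhere. -/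
theorem inverse_of_arclength (f : ℝ → ℝ≥0∞)
    (husc : UpperSemicontinuousOn f (Set.Ici 0))
    (hmono : MonotoneOn f (Set.Ici 0)) (hf0 : f 0 = 0)
    (hint : ∃ ε : ℝ, 0 < ε ∧ ∫⁻ y in Set.Ioo 0 ε, (f y)⁻¹ < ∞) :
    ∃ y₀ : ℝ, 0 < y₀ ∧ ∃ s₀ : ℝ, 0 < s₀ ∧ Sfun f y₀ = s₀ ∧
      StrictMonoOn (Sfun f) (Set.Icc 0 y₀) ∧
      ContinuousOn (Sfun f) (Set.Icc 0 y₀) ∧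
      Sfun f '' Set.Icc 0 y₀ = Set.Icc 0 s₀ ∧
      ∃ Y : ℝ → ℝ,
        (∀ t ∈ Set.Icc 0 y₀, Y (Sfun f t) = t) ∧
        (∀ s ∈ Set.Icc 0 s₀, Sfun f (Y s) = s) ∧
        LipschitzOnWith (f y₀).toNNReal Y (Set.Icc 0 s₀) ∧
        Y 0 = 0 ∧
        HasDerivWithinAt Y 0 (Set.Ici 0) 0 ∧
        ∀ᵐ s ∂volume, s ∈ Set.Icc 0 s₀ → HasDerivAt Y (f (Y s)).toReal s := by
  classical
  obtain ⟨ε, hε, hfin⟩ := hint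
  -- the monotone extension of `f`
  set F : ℝ → ℝ≥0∞ := fun t => f (max t 0) with hFdef
  have hFmono : Monotone F := fun a b hab =>
    hmono (Set.mem_Ici.2 (le_max_right _ _)) (Set.mem_Ici.2 (le_max_right _ _)) (max_le_max hab le_rfl)
  have hFf : ∀ t : ℝ, 0 ≤ t → F t = f t := fun t ht => by
    simp only [hFdef, max_eq_left ht]
  have hFmeas : Measurable F := hFmono.measurable
  -- upper bound near 0 from upper semicontinuity
  obtain ⟨δ, hδpos, hball⟩ : ∃ δ > 0, Metric.ball (0:ℝ) δ ∩ Set.Ici 0 ⊆ {t | f t < 1} :=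
    Metric.mem_nhdsWithin_iff.1 (husc 0 Set.self_mem_Ici 1 (by show f 0 < _; rw [hf0]; exact zero_lt_one))
  set y₀ : ℝ := min (δ/2) ε with hy₀def
  have hy₀pos : 0 < y₀ := lt_min (by linarith) hε
  have hy₀ε : y₀ ≤ ε := min_le_right _ _
  have hy₀δ : y₀ < δ := lt_of_le_of_lt (min_le_left _ _) (by linarith)
  have hflt : ∀ t : ℝ, 0 ≤ t → t ≤ y₀ → f t < 1 := by
    intro t ht0 hty
    apply hball
    refine ⟨?_, ht0⟩
    rw [Metric.mem_ball, Real.dist_eq, sub_zero, abs_of_nonneg ht0]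
    exact lt_of_le_of_lt hty hy₀δ
  have hFlt : ∀ t : ℝ, 0 ≤ t → t ≤ y₀ → F t < 1 := by
    intro t ht0 hty; rw [hFf t ht0]; exact hflt t ht0 hty
  have hFne : ∀ t : ℝ, 0 ≤ t → t ≤ y₀ → F t ≠ ∞ := fun t ht0 hty =>
    ((hFlt t ht0 hty).trans (by norm_num)).ne
  -- positivity of f on (0, y₀]
  have hFpos : ∀ t : ℝ, 0 < t → t ≤ y₀ → 0 < F t := by
    intro t ht0 hty
    rw [hFf t ht0.le]
    by_contra h
    push_neg at h
    have hft : f t = 0 := le_antisymm h bot_le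
    have hzero : ∀ u ∈ Set.Ioo (0:ℝ) t, (f u)⁻¹ = (∞ : ℝ≥0∞) := by
      intro u hu
      have : f u ≤ f t := hmono hu.1.le (le_trans hu.1.le hu.2.le) hu.2.le
      rw [hft] at this
      rw [le_antisymm this bot_le, ENNReal.inv_zero]
    have htop : ∫⁻ u in Set.Ioo (0:ℝ) t, (f u)⁻¹ = ∞ := by
      rw [setLIntegral_congr_fun measurableSet_Ioo hzero,
        setLIntegral_const]
      rw [Real.volume_Ioo, ENNReal.top_mul]
      simp [ht0]
    have hsub : Set.Ioo (0:ℝ) t ⊆ Set.Ioo (0:ℝ) ε := fun u hu =>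
      ⟨hu.1, lt_of_lt_of_le hu.2 (hty.trans hy₀ε)⟩
    have := lintegral_mono_set (μ := volume) (f := fun u => (f u)⁻¹) hsub
    rw [htop] at this
    exact absurd (lt_of_le_of_lt this hfin) (lt_irrefl _)
  -- the real-valued integrand
  set g : ℝ → ℝ := fun t => ((F t)⁻¹).toReal with hgdef
  have hgmeas : Measurable g := hFmeas.inv.ennreal_toReal
  have hgnonneg : ∀ t, 0 ≤ g t := fun t => ENNReal.toReal_nonneg
  have hlint_eq : ∀ y : ℝ, ∫⁻ t in Set.Ioo 0 y, (f t)⁻¹ = ∫⁻ t in Set.Ioo 0 y, (F t)⁻¹ := by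
    intro y
    refine setLIntegral_congr_fun measurableSet_Ioo ?_
    intro t ht
    show (f t)⁻¹ = (F t)⁻¹
    rw [hFf t ht.1.le]
  have hfinF : ∫⁻ t in Set.Ioo 0 y₀, (F t)⁻¹ ≠ ∞ := by
    rw [← hlint_eq y₀]
    exact (lt_of_le_of_lt
      (lintegral_mono_set (μ := volume) (f := fun u => (f u)⁻¹) (Set.Ioo_subset_Ioo le_rfl hy₀ε)) hfin).ne
  have hgint : IntegrableOn g (Set.Ioo 0 y₀) :=
    integrable_toReal_of_lintegral_ne_top hFmeas.inv.aemeasurable hfinF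
  have hgintIcc : IntegrableOn g (Set.Icc 0 y₀) := by
    rwa [IntegrableOn, ← Measure.restrict_congr_set Ioo_ae_eq_Icc]
  have hii : ∀ a b : ℝ, a ∈ Set.Icc 0 y₀ → b ∈ Set.Icc 0 y₀ →
      IntervalIntegrable g volume a b := by
    intro a b ha hb
    refine (hgintIcc.mono_set ?_).intervalIntegrable
    rw [Set.uIcc_eq_union]
    exact Set.union_subset (Set.Icc_subset_Icc ha.1 hb.2) (Set.Icc_subset_Icc hb.1 ha.2)
  set S' : ℝ → ℝ := fun y => ∫ t in (0:ℝ)..y, g t with hS'def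
  have hS : ∀ y ∈ Set.Icc (0:ℝ) y₀, Sfun f y = S' y := by
    intro y hy
    have hae : ∀ᵐ t ∂(volume.restrict (Set.Ioo (0:ℝ) y)), (F t)⁻¹ < ∞ := by
      refine (ae_restrict_iff' measurableSet_Ioo).2 (Filter.Eventually.of_forall ?_)
      intro t ht
      exact ENNReal.inv_lt_top.2 (hFpos t ht.1 (ht.2.le.trans hy.2))
    have h1 : ∫ t in Set.Ioo (0:ℝ) y, g t
        = (∫⁻ t in Set.Ioo (0:ℝ) y, (F t)⁻¹).toReal :=
      integral_toReal hFmeas.inv.aemeasurable hae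
    have h2 : S' y = ∫ t in Set.Ioo (0:ℝ) y, g t := by
      show (∫ t in (0:ℝ)..y, g t) = _
      rw [intervalIntegral.integral_of_le hy.1, integral_Ioc_eq_integral_Ioo]
    rw [Sfun, hlint_eq y, ← h1, h2]
  have hS'0 : S' 0 = 0 := intervalIntegral.integral_same
  -- the key estimate
  have key : ∀ y₁ y₂ : ℝ, y₁ ∈ Set.Icc 0 y₀ → y₂ ∈ Set.Icc 0 y₀ → y₁ ≤ y₂ →
      (y₂ - y₁) * ((F y₂).toReal)⁻¹ ≤ S' y₂ - S' y₁ := by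
    intro y₁ y₂ h1 h2 h12
    have hadd : S' y₁ + ∫ t in y₁..y₂, g t = S' y₂ :=
      intervalIntegral.integral_add_adjacent_intervals
        (hii 0 y₁ ⟨le_rfl, hy₀pos.le⟩ h1) (hii y₁ y₂ h1 h2)
    rcases eq_or_lt_of_le h12 with rfl | hlt
    · simp
    have hy₂pos : 0 < y₂ := lt_of_le_of_lt h1.1 hlt
    have hFy₂ : 0 < F y₂ := hFpos y₂ hy₂pos h2.2
    have hle : (fun _ : ℝ => ((F y₂).toReal)⁻¹) ≤ᵐ[volume.restrict (Set.Icc y₁ y₂)] g := by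
      have h0 : ∀ᵐ t : ℝ, t ≠ (0:ℝ) := by
        rw [ae_iff]
        simpa using measure_singleton (0:ℝ)
      filter_upwards [ae_restrict_of_ae h0, ae_restrict_mem measurableSet_Icc]
        with t ht0 htm
      have ht0' : 0 < t := lt_of_le_of_ne (h1.1.trans htm.1) (Ne.symm ht0)
      have hFt : 0 < F t := hFpos t ht0' (htm.2.trans h2.2)
      have hFtle : (F t).toReal ≤ (F y₂).toReal :=
        (ENNReal.toReal_le_toReal (hFne t ht0'.le (htm.2.trans h2.2)) (hFne y₂ hy₂pos.le h2.2)).2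
          (hFmono htm.2)
      have hFtpos : 0 < (F t).toReal :=
        ENNReal.toReal_pos hFt.ne' (hFne t ht0'.le (htm.2.trans h2.2))
      have : ((F y₂).toReal)⁻¹ ≤ ((F t).toReal)⁻¹ := by
        apply inv_anti₀ hFtpos hFtle
      simpa [hgdef, ENNReal.toReal_inv] using this
    have hmon := intervalIntegral.integral_mono_ae_restrict h12
      (intervalIntegrable_const) (hii y₁ y₂ h1 h2) hle
    rw [intervalIntegral.integral_const] at hmon
    have : S' y₂ - S' y₁ = ∫ t in y₁..y₂, g t := by linarith
    rw [this]
    simpa [smul_eq_mul] using hmon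
  have hSfun0 : Sfun f 0 = 0 := by simp [Sfun]
  have hsm : StrictMonoOn (Sfun f) (Set.Icc 0 y₀) := by
    intro y₁ h1 y₂ h2 hlt
    rw [hS y₁ h1, hS y₂ h2]
    have hk := key y₁ y₂ h1 h2 hlt.le
    have hy₂pos : 0 < y₂ := lt_of_le_of_lt h1.1 hlt
    have hFy₂ : 0 < (F y₂).toReal :=
      ENNReal.toReal_pos (hFpos y₂ hy₂pos h2.2).ne' (hFne y₂ hy₂pos.le h2.2)
    have : 0 < (y₂ - y₁) * ((F y₂).toReal)⁻¹ := mul_pos (by linarith) (inv_pos.2 hFy₂)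
    linarith
  set s₀ : ℝ := Sfun f y₀ with hs₀def
  have hy₀mem : y₀ ∈ Set.Icc (0:ℝ) y₀ := ⟨hy₀pos.le, le_rfl⟩
  have h0mem : (0:ℝ) ∈ Set.Icc (0:ℝ) y₀ := ⟨le_rfl, hy₀pos.le⟩
  have hs₀pos : 0 < s₀ := by
    have := hsm h0mem hy₀mem hy₀pos
    rwa [hSfun0] at this
  have hcont : ContinuousOn (Sfun f) (Set.Icc 0 y₀) := by
    have hc := intervalIntegral.continuousOn_primitive (f := g) (a := 0) (b := y₀)
      (μ := volume) hgintIcc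
    refine ContinuousOn.congr hc ?_
    intro y hy
    rw [hS y hy]
    show (∫ t in (0:ℝ)..y, g t) = ∫ t in Set.Ioc (0:ℝ) y, g t
    rw [intervalIntegral.integral_of_le hy.1]
  have himage : Sfun f '' Set.Icc 0 y₀ = Set.Icc 0 s₀ := by
    apply Set.Subset.antisymm
    · rintro _ ⟨t, ht, rfl⟩
      constructor
      · rw [← hSfun0]
        exact hsm.monotoneOn h0mem ht ht.1
      · exact hsm.monotoneOn ht hy₀mem ht.2
    · have := intermediate_value_Icc hy₀pos.le hcont
      rwa [hSfun0, ← hs₀def] at this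
  -- the inverse function
  set Y : ℝ → ℝ := Function.invFunOn (Sfun f) (Set.Icc 0 y₀) with hYdef
  have hinj : Set.InjOn (Sfun f) (Set.Icc 0 y₀) := hsm.injOn
  have hYleft : ∀ t ∈ Set.Icc (0:ℝ) y₀, Y (Sfun f t) = t := fun t ht =>
    hinj.leftInvOn_invFunOn ht
  have hYex : ∀ s ∈ Set.Icc (0:ℝ) s₀, ∃ t ∈ Set.Icc (0:ℝ) y₀, Sfun f t = s := by
    intro s hs
    rw [← himage] at hs
    exact hs
  have hYright : ∀ s ∈ Set.Icc (0:ℝ) s₀, Sfun f (Y s) = s := fun s hs =>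
    Function.invFunOn_eq (hYex s hs)
  have hYmem : ∀ s ∈ Set.Icc (0:ℝ) s₀, Y s ∈ Set.Icc (0:ℝ) y₀ := fun s hs =>
    Function.invFunOn_mem (hYex s hs)
  have hY0 : Y 0 = 0 := by
    have := hYleft 0 h0mem
    rwa [hSfun0] at this
  set L : ℝ := (F y₀).toReal with hLdef
  have hLnonneg : 0 ≤ L := ENNReal.toReal_nonneg
  -- the main Lipschitz-type estimate for Y
  have haux : ∀ s₁ ∈ Set.Icc (0:ℝ) s₀, ∀ s₂ ∈ Set.Icc (0:ℝ) s₀, s₁ ≤ s₂ →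
      Y s₁ ≤ Y s₂ ∧ Y s₂ - Y s₁ ≤ L * (s₂ - s₁) := by
    intro s₁ hs₁ s₂ hs₂ h12
    have hm₁ := hYmem s₁ hs₁
    have hm₂ := hYmem s₂ hs₂
    have hyle : Y s₁ ≤ Y s₂ := by
      by_contra h
      push_neg at h
      have := hsm hm₂ hm₁ h
      rw [hYright s₁ hs₁, hYright s₂ hs₂] at this
      linarith
    refine ⟨hyle, ?_⟩
    rcases eq_or_lt_of_le hyle with heq | hlt
    · rw [heq]
      have : 0 ≤ L * (s₂ - s₁) := mul_nonneg hLnonneg (by linarith)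
      linarith
    have hy₂pos : 0 < Y s₂ := lt_of_le_of_lt hm₁.1 hlt
    have hk := key (Y s₁) (Y s₂) hm₁ hm₂ hyle
    rw [← hS _ hm₁, ← hS _ hm₂, hYright s₁ hs₁, hYright s₂ hs₂] at hk
    have hFy₂top := hFne (Y s₂) hy₂pos.le hm₂.2
    have he : 0 < (F (Y s₂)).toReal :=
      ENNReal.toReal_pos (hFpos (Y s₂) hy₂pos hm₂.2).ne' hFy₂top
    have heL : (F (Y s₂)).toReal ≤ L :=
      (ENNReal.toReal_le_toReal hFy₂top (hFne y₀ hy₀pos.le le_rfl)).2 (hFmono hm₂.2)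
    have h1 : Y s₂ - Y s₁ ≤ (s₂ - s₁) * (F (Y s₂)).toReal := by
      have := mul_le_mul_of_nonneg_right hk he.le
      rwa [mul_assoc, inv_mul_cancel₀ he.ne', mul_one] at this
    calc Y s₂ - Y s₁ ≤ (s₂ - s₁) * (F (Y s₂)).toReal := h1
      _ ≤ (s₂ - s₁) * L := mul_le_mul_of_nonneg_left heL (by linarith)
      _ = L * (s₂ - s₁) := mul_comm _ _
  have hcoeL : ((f y₀).toNNReal : ℝ) = L := by
    rw [hLdef, hFf y₀ hy₀pos.le]; rfl
  have hYlip : LipschitzOnWith (f y₀).toNNReal Y (Set.Icc 0 s₀) := by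
    rw [lipschitzOnWith_iff_dist_le_mul]
    intro s₁ hs₁ s₂ hs₂
    rw [hcoeL, Real.dist_eq, Real.dist_eq]
    rcases le_total s₁ s₂ with h | h
    · obtain ⟨hle, hest⟩ := haux s₁ hs₁ s₂ hs₂ h
      rw [abs_sub_comm, abs_of_nonneg (by linarith), abs_sub_comm, abs_of_nonneg (by linarith)]
      linarith
    · obtain ⟨hle, hest⟩ := haux s₂ hs₂ s₁ hs₁ h
      rw [abs_of_nonneg (by linarith), abs_of_nonneg (by linarith)]
      linarith
  -- right derivative at 0
  have hslope : ∀ s ∈ Set.Ioc (0:ℝ) s₀, Y s / s ≤ (f (Y s)).toReal := by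
    intro s hs
    have hsIcc : s ∈ Set.Icc (0:ℝ) s₀ := ⟨hs.1.le, hs.2⟩
    have hm := hYmem s hsIcc
    rcases eq_or_lt_of_le hm.1 with heq | hypos
    · rw [← heq, zero_div]
      exact ENNReal.toReal_nonneg
    have hk := key 0 (Y s) h0mem hm hm.1
    rw [← hS _ h0mem, ← hS _ hm, hSfun0, hYright s hsIcc, sub_zero, sub_zero] at hk
    have hFtop := hFne (Y s) hypos.le hm.2
    have he : 0 < (F (Y s)).toReal := ENNReal.toReal_pos (hFpos (Y s) hypos hm.2).ne' hFtop
    rw [div_le_iff₀ hs.1, ← hFf (Y s) hypos.le]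
    have := mul_le_mul_of_nonneg_right hk he.le
    rwa [mul_assoc, inv_mul_cancel₀ he.ne', mul_one, mul_comm s _] at this
  have hder0 : HasDerivWithinAt Y 0 (Set.Ici 0) 0 := by
    rw [hasDerivWithinAt_iff_tendsto_slope, Set.Ici_sdiff_left]
    rw [Metric.tendsto_nhds]
    intro c hc
    obtain ⟨δ', hδ'pos, hball'⟩ : ∃ δ' > 0,
        Metric.ball (0:ℝ) δ' ∩ Set.Ici 0 ⊆ {t | f t < ENNReal.ofReal c} :=
      Metric.mem_nhdsWithin_iff.1 (husc 0 Set.self_mem_Ici (ENNReal.ofReal c)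
        (by show f 0 < _; rw [hf0]; exact ENNReal.ofReal_pos.2 hc))
    set r : ℝ := min s₀ (δ' / (L + 1)) with hrdef
    have hrpos : 0 < r := lt_min hs₀pos (by positivity)
    filter_upwards [Ioo_mem_nhdsGT_of_mem (Set.mem_Ico.2 ⟨le_rfl, hrpos⟩)] with s hs
    have hsIoc : s ∈ Set.Ioc (0:ℝ) s₀ := ⟨hs.1, hs.2.le.trans (min_le_left _ _)⟩
    have hsIcc : s ∈ Set.Icc (0:ℝ) s₀ := ⟨hs.1.le, hsIoc.2⟩
    have hm := hYmem s hsIcc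
    have hYle : Y s ≤ L * s := by
      have := (haux 0 ⟨le_rfl, hs₀pos.le⟩ s hsIcc hs.1.le).2
      rw [hY0] at this
      linarith
    have hYlt : Y s < δ' := by
      have hsr : s < δ' / (L + 1) := lt_of_lt_of_le hs.2 (min_le_right _ _)
      have : L * s < (L + 1) * (δ' / (L + 1)) := by
        have h1 : L * s ≤ (L + 1) * s := by nlinarith [hs.1.le]
        have h2 : (L + 1) * s < (L + 1) * (δ' / (L + 1)) := by
          apply mul_lt_mul_of_pos_left hsr (by linarith)
        linarith
      rw [mul_div_cancel₀ _ (by linarith : L + 1 ≠ 0)] at this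
      linarith
    have hfY : f (Y s) < ENNReal.ofReal c := by
      apply hball'
      refine ⟨?_, hm.1⟩
      rw [Metric.mem_ball, Real.dist_eq, sub_zero, abs_of_nonneg hm.1]
      exact hYlt
    have hfYr : (f (Y s)).toReal < c := ENNReal.toReal_lt_of_lt_ofReal hfY
    have hslope_le := hslope s hsIoc
    rw [Real.dist_eq, sub_zero, slope_def_field, hY0, sub_zero, sub_zero]
    rw [abs_of_nonneg (div_nonneg hm.1 hsIoc.1.le)]
    exact lt_of_le_of_lt hslope_le hfYr
  -- a.e. differentiability
  have hae : ∀ᵐ s ∂volume, s ∈ Set.Icc 0 s₀ → HasDerivAt Y (f (Y s)).toReal s := by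
    set D : Set ℝ := {y | ¬ContinuousAt F y} with hDdef
    have hD : D.Countable := hFmono.countable_not_continuousAt
    set E : Set ℝ := insert (0:ℝ) (insert s₀ (Sfun f '' D)) with hEdef
    have hE : volume E = 0 :=
      (((hD.image (Sfun f)).insert s₀).insert (0:ℝ)).measure_zero volume
    filter_upwards [measure_eq_zero_iff_ae_notMem.1 hE] with s hsE hsIcc
    have hs0 : s ≠ 0 := fun h => hsE (by rw [hEdef, h]; exact Set.mem_insert _ _)
    have hss₀ : s ≠ s₀ := fun h => hsE
      (by rw [hEdef, h]; exact Set.mem_insert_of_mem _ (Set.mem_insert _ _))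
    have hsD : s ∉ Sfun f '' D := fun h => hsE
      (Set.mem_insert_of_mem _ (Set.mem_insert_of_mem _ h))
    have hsIoo : s ∈ Set.Ioo (0:ℝ) s₀ :=
      ⟨lt_of_le_of_ne hsIcc.1 (Ne.symm hs0), lt_of_le_of_ne hsIcc.2 hss₀⟩
    have hm := hYmem s hsIcc
    have hSY := hYright s hsIcc
    have hy0 : Y s ≠ 0 := by
      intro h
      rw [h, hSfun0] at hSY
      exact hs0 hSY.symm
    have hyy₀ : Y s ≠ y₀ := by
      intro h
      rw [h, ← hs₀def] at hSY
      exact hss₀ hSY.symm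
    have hyIoo : Y s ∈ Set.Ioo (0:ℝ) y₀ :=
      ⟨lt_of_le_of_ne hm.1 (Ne.symm hy0), lt_of_le_of_ne hm.2 hyy₀⟩
    have hFc : ContinuousAt F (Y s) := by
      by_contra h
      exact hsD ⟨Y s, h, hSY⟩
    have hFYpos : 0 < F (Y s) := hFpos (Y s) hyIoo.1 hm.2
    have hFYtop : F (Y s) ≠ ∞ := hFne (Y s) hm.1 hm.2
    have hgc : ContinuousAt g (Y s) := by
      have h1 : ContinuousAt (fun t => (F t)⁻¹) (Y s) :=
        (continuous_inv.continuousAt).comp hFc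
      exact (ENNReal.tendsto_toReal (ENNReal.inv_ne_top.2 hFYpos.ne')).comp h1
    have hSd : HasDerivAt S' (g (Y s)) (Y s) := by
      apply intervalIntegral.integral_hasDerivAt_right
        (hii 0 (Y s) h0mem hm)
        ⟨Set.univ, Filter.univ_mem, (hgmeas.aestronglyMeasurable).restrict⟩ hgc
    have hSfd : HasDerivAt (Sfun f) (g (Y s)) (Y s) := by
      apply hSd.congr_of_eventuallyEq
      filter_upwards [Ioo_mem_nhds hyIoo.1 hyIoo.2] with t ht
      exact hS t ⟨ht.1.le, ht.2.le⟩
    have hgy0 : g (Y s) ≠ 0 := by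
      simp only [hgdef, ENNReal.toReal_inv]
      exact inv_ne_zero (ENNReal.toReal_pos hFYpos.ne' hFYtop).ne'
    have hYc : ContinuousAt Y s := by
      refine (hYlip.continuousOn s hsIcc).continuousAt ?_
      exact Filter.mem_of_superset (Ioo_mem_nhds hsIoo.1 hsIoo.2) Set.Ioo_subset_Icc_self
    have hfg : ∀ᶠ t in nhds s, Sfun f (Y t) = t := by
      filter_upwards [Filter.mem_of_superset (Ioo_mem_nhds hsIoo.1 hsIoo.2)
        Set.Ioo_subset_Icc_self] with t ht
      exact hYright t ht
    have hYd : HasDerivAt Y (g (Y s))⁻¹ s := hSfd.of_local_left_inverse hYc hgy0 hfg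
    have hval : (g (Y s))⁻¹ = (f (Y s)).toReal := by
      rw [hgdef]
      simp only [ENNReal.toReal_inv, inv_inv]
      rw [hFf (Y s) hm.1]
    rwa [hval] at hYd
  exact ⟨y₀, hy₀pos, s₀, hs₀pos, rfl, hsm, hcont, himage, Y, hYleft, hYright, hYlip, hY0,
    hder0, hae⟩
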